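/- Let X be a fractured Polish space, μ a non-atomic Borel probability measure on X with full support, and T an ergodic measure-preserving homeomorphism of (X, μ). Then for every h ∈ ℕ and ε > 0 there is a clopen set B ⊆ X such that the sets B, TB, …, T^{h-1}B are pairwise disjoint and μ(B ∪ TB ∪ ⋯ ∪ T^{h-1}B) > 1 − ε. -/

import Mathlib

open MeasureTheory Set TopologicalSpace

/-- A topological space is *fractured* if its topology has a countable base
consisting of clopen subsets. -/
def Fractured (X : Type*) [TopologicalSpace X] : Prop :=
  ∃ B : Set (Set X), B.Countable ∧ (∀ s ∈ B, IsClopen s) ∧ IsTopologicalBasis B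

/-- In a fractured Polish space with a non-atomic probability measure there are nonempty
clopen sets of arbitrarily small measure. -/
lemma exists_small_clopen {X : Type*} [TopologicalSpace X] [PolishSpace X] [MeasurableSpace X]
    [BorelSpace X]
    (hXf : Fractured X) (μ : Measure X) [IsProbabilityMeasure μ] [NullSingletonClass μ]
    (δ : ENNReal) (hδ : 0 < δ) :
    ∃ A : Set X, IsClopen A ∧ A.Nonempty ∧ μ A < δ := by
  have hne : Nonempty X := by
    by_contra hempty
    rw [not_nonempty_iff] at hempty
    have h1 : μ univ = 1 := measure_univ
    rw [Set.univ_eq_empty_iff.mpr hempty, measure_empty] at h1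
    exact zero_ne_one h1
  letI := upgradeIsCompletelyMetrizable X
  obtain ⟨x⟩ := hne
  have hx : μ {x} < δ := by simpa [measure_singleton] using hδ
  obtain ⟨U, hxU, hUopen, hUμ⟩ := Set.exists_isOpen_lt_of_lt _ _ hx
  obtain ⟨Bb, -, hclop, hbasis⟩ := hXf
  obtain ⟨A, hA, hxA, hAU⟩ := hbasis.exists_subset_of_mem_open (hxU (mem_singleton x)) hUopen
  exact ⟨A, hclop A hA, ⟨x, hxA⟩, lt_of_le_of_lt (measure_mono hAU) hUμ⟩

/-- For an ergodic measure preserving homeomorphism, the forward orbit of a set of positive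
measure sweeps out the whole space. -/
lemma measure_sweep {X : Type*} [TopologicalSpace X] [MeasurableSpace X] [BorelSpace X]
    (μ : Measure X) [IsProbabilityMeasure μ] (T : X ≃ₜ X) (hT : MeasurePreserving T μ μ)
    (hTerg : ∀ A : Set X, MeasurableSet A → T ⁻¹' A = A → μ A = 0 ∨ μ Aᶜ = 0)
    (A : Set X) (hA : MeasurableSet A) (hA0 : μ A ≠ 0) :
    μ (⋃ n : ℕ, (⇑T)^[n] ⁻¹' A) = 1 := by
  set f := ⇑T with hf
  have hfm : ∀ n, Measurable (f^[n]) := fun n => (hT.iterate n).measurable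
  set P : ℕ → Set X := fun n => f^[n] ⁻¹' A with hPdef
  have hPm : ∀ n, MeasurableSet (P n) := fun n => (hfm n) hA
  set S := ⋃ n, P n with hS
  have hSm : MeasurableSet S := MeasurableSet.iUnion hPm
  have hstep : ∀ y, f y ∈ S → y ∈ S := by
    intro y hy
    rw [hS, mem_iUnion] at hy ⊢
    obtain ⟨n, hn⟩ := hy
    refine ⟨n + 1, ?_⟩
    have : f^[n + 1] y = f^[n] (f y) := Function.iterate_succ_apply f n y
    simpa [hPdef, this] using hn
  set g : ℕ → Set X := fun N => f^[N] ⁻¹' S with hg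
  have hgm : ∀ N, MeasurableSet (g N) := fun N => (hfm N) hSm
  have hganti : Antitone g := by
    refine antitone_nat_of_succ_le fun N x hx => ?_
    have hx' : f^[N + 1] x ∈ S := hx
    rw [Function.iterate_succ_apply' f N x] at hx'
    exact hstep _ hx'
  set Sinf := ⋂ N, g N with hSinf
  have hSinfm : MeasurableSet Sinf := MeasurableSet.iInter hgm
  have hμg : ∀ N, μ (g N) = μ S := fun N =>
    (hT.iterate N).measure_preimage hSm.nullMeasurableSet
  have hμSinf : μ Sinf = μ S := by
    have h1 : Filter.Tendsto (fun N => μ (g N)) Filter.atTop (nhds (μ Sinf)) :=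
      tendsto_measure_iInter_atTop (fun N => (hgm N).nullMeasurableSet) hganti
        ⟨0, measure_ne_top μ _⟩
    have h2 : Filter.Tendsto (fun N => μ (g N)) Filter.atTop (nhds (μ S)) := by
      simp only [hμg]; exact tendsto_const_nhds
    exact tendsto_nhds_unique h1 h2
  have hinv : T ⁻¹' Sinf = Sinf := by
    ext x
    simp only [mem_preimage, hSinf, mem_iInter]
    constructor
    · intro hx N
      have h1 : x ∈ g (N + 1) := by
        have h0 : f^[N] (T x) ∈ S := hx N
        have : f^[N + 1] x ∈ S := by
          rw [Function.iterate_succ_apply f N x]; exact h0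
        exact this
      exact hganti (Nat.le_succ N) h1
    · intro hx
      intro N
      have h1 : x ∈ g (N + 1) := hx (N + 1)
      have : f^[N + 1] x ∈ S := h1
      rw [Function.iterate_succ_apply f N x] at this
      exact this
  rcases hTerg Sinf hSinfm hinv with h0 | h1
  · exfalso
    apply hA0
    have hA_le : μ A ≤ μ S := by
      have : A ⊆ S := by
        rw [hS]
        refine subset_iUnion_of_subset 0 ?_
        simp [hPdef]
      exact measure_mono this
    have : μ S = 0 := by rw [← hμSinf]; exact h0
    exact le_antisymm (this ▸ hA_le) (by simp)
  · have : μ Sinf = 1 := (prob_compl_eq_zero_iff hSinfm).mp h1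
    rw [← hμSinf]
    exact this

/-- **Lemma 6 of del Junco–Şahin (clopen Rohlin lemma).** If `T` is an ergodic
measure-preserving homeomorphism of a fractured Polish space with a non-atomic fully
supported probability measure, then for every `h ≥ 1` and `ε > 0` there is a clopen set `B`
such that `B, TB, …, T^{h-1}B` are pairwise disjoint and cover more than `1 - ε` of `X`. -/
theorem clopen_rohlin_lemma
    {X : Type*} [TopologicalSpace X] [PolishSpace X] [MeasurableSpace X] [BorelSpace X]
    (hXf : Fractured X)
    (μ : Measure X) [IsProbabilityMeasure μ] [NullSingletonClass μ]
    (hfull : ∀ U : Set X, IsOpen U → U.Nonempty → μ U ≠ 0)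
    (T : X ≃ₜ X) (hT : MeasurePreserving T μ μ)
    (hTerg : ∀ A : Set X, MeasurableSet A → T ⁻¹' A = A → μ A = 0 ∨ μ Aᶜ = 0)
    (h : ℕ) (hpos : 0 < h) (ε : ℝ) (hε : 0 < ε) :
    ∃ B : Set X, IsClopen B ∧
      Pairwise (Function.onFun Disjoint (fun i : Fin h => (T.toEquiv ^ (i : ℕ)) '' B)) ∧
      μ (⋃ i : Fin h, (T.toEquiv ^ (i : ℕ)) '' B) > 1 - ENNReal.ofReal ε := by
  classical
  -- shrink ε so that it is at most 1/2
  set ε' : ℝ := min ε 2⁻¹ with hε'def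
  have hε'pos : 0 < ε' := lt_min hε (by norm_num)
  have hε'le : ε' ≤ 2⁻¹ := min_le_right _ _
  have hofle : ENNReal.ofReal ε' ≤ ENNReal.ofReal ε :=
    ENNReal.ofReal_le_ofReal (min_le_left _ _)
  have hε'le1 : ENNReal.ofReal ε' ≤ 1 := ENNReal.ofReal_le_one.mpr (by linarith)
  set δ2 : ENNReal := ENNReal.ofReal (ε' / 2) with hδ2def
  have hδ2pos : 0 < δ2 := ENNReal.ofReal_pos.mpr (by positivity)
  have hδ2ne : δ2 ≠ ⊤ := ENNReal.ofReal_ne_top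
  have hδ2le1 : δ2 ≤ 1 := ENNReal.ofReal_le_one.mpr (by linarith)
  have hδ2δ2 : δ2 + δ2 = ENNReal.ofReal ε' := by
    rw [hδ2def, ← ENNReal.ofReal_add (by positivity) (by positivity)]
    norm_num
  have hhR : (0:ℝ) < h := by exact_mod_cast hpos
  -- a small nonempty clopen set
  obtain ⟨A, hAclopen, hAne, hAsmall⟩ := exists_small_clopen hXf μ
    (ENNReal.ofReal (ε' / (2 * h))) (ENNReal.ofReal_pos.mpr (by positivity))
  have hAmeas : MeasurableSet A := hAclopen.isOpen.measurableSet
  have hA0 : μ A ≠ 0 := hfull A hAclopen.isOpen hAne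
  set f := ⇑T with hf
  have hfm : ∀ n, Measurable (f^[n]) := fun n => (hT.iterate n).measurable
  have hfc : Continuous f := T.continuous
  set P : ℕ → Set X := fun n => f^[n] ⁻¹' A with hPdef
  have hPclopen : ∀ n, IsClopen (P n) := fun n => hAclopen.preimage (hfc.iterate n)
  have hPmeas : ∀ n, MeasurableSet (P n) := fun n => (hPclopen n).isOpen.measurableSet
  have hμP : ∀ n, μ (P n) = μ A := fun n =>
    (hT.iterate n).measure_preimage hAmeas.nullMeasurableSet
  -- the forward orbit of A sweeps out the space
  have hμS : μ (⋃ n : ℕ, P n) = 1 := measure_sweep μ T hT hTerg A hAmeas hA0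
  set Q : ℕ → Set X := fun N => ⋃ n ∈ Finset.range (N + 1), P n with hQdef
  have hQmono : Monotone Q := by
    intro a b hab
    exact biUnion_subset_biUnion_left (fun n hn =>
      Finset.mem_range.mpr (lt_of_lt_of_le (Finset.mem_range.mp hn) (by omega)))
  have hQU : (⋃ N, Q N) = ⋃ n, P n := by
    apply Subset.antisymm
    · exact iUnion_subset fun N => iUnion₂_subset fun n _ => subset_iUnion P n
    · exact iUnion_subset fun n => subset_iUnion_of_subset n
        (subset_biUnion_of_mem (Finset.self_mem_range_succ n))
  have hsup : 1 - δ2 < ⨆ N, μ (Q N) := by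
    have hd : Directed (· ⊆ ·) Q := hQmono.directed_le
    rw [← hd.measure_iUnion, hQU, hμS]
    exact ENNReal.sub_lt_self ENNReal.one_ne_top one_ne_zero hδ2pos.ne'
  obtain ⟨N₀, hN₀⟩ := lt_iSup_iff.mp hsup
  set N := max N₀ h with hNdef
  have hhN : h ≤ N := le_max_right _ _
  have hE : 1 - δ2 < μ (Q N) :=
    hN₀.trans_le (measure_mono (hQmono (le_max_left _ _)))
  -- the first entry time partition
  set C : ℕ → Set X := fun n => P n ∩ ⋂ m ∈ Finset.range n, (P m)ᶜ with hCdef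
  have hCclopen : ∀ n, IsClopen (C n) := fun n =>
    (hPclopen n).inter (isClopen_biInter_finset fun m _ => (hPclopen m).compl)
  have hCmeas : ∀ n, MeasurableSet (C n) := fun n => (hCclopen n).isOpen.measurableSet
  have hmemC : ∀ (n : ℕ) (x : X), x ∈ C n ↔ (f^[n] x ∈ A ∧ ∀ m < n, f^[m] x ∉ A) := by
    intro n x
    simp [hCdef, hPdef, Finset.mem_range]
  have hCsubP : ∀ n, C n ⊆ P n := fun n => inter_subset_left
  have hkey1 : ∀ n i, C (n + i) ⊆ f^[i] ⁻¹' C n := by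
    intro n i x hx
    obtain ⟨h1, h2⟩ := (hmemC _ x).mp hx
    rw [mem_preimage, hmemC]
    constructor
    · rw [← Function.iterate_add_apply]
      exact h1
    · intro m hm
      rw [← Function.iterate_add_apply]
      exact h2 (m + i) (by omega)
  have hCdisj : ∀ {m n : ℕ}, m ≠ n → Disjoint (C m) (C n) := by
    have key : ∀ m n, m < n → Disjoint (C m) (C n) := by
      intro m n hmn
      rw [Set.disjoint_left]
      intro x hxm hxn
      exact ((hmemC n x).mp hxn).2 m hmn ((hmemC m x).mp hxm).1
    intro m n hmn
    rcases hmn.lt_or_gt with hlt | hlt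
    exacts [key _ _ hlt, (key _ _ hlt).symm]
  have hμCle : ∀ n, μ (C n) ≤ μ A := fun n =>
    le_trans (measure_mono (hCsubP n)) (le_of_eq (hμP n))
  have hμCdecr : ∀ n i, μ (C (n + i)) ≤ μ (C n) := by
    intro n i
    refine le_trans (measure_mono (hkey1 n i)) (le_of_eq ?_)
    exact (hT.iterate i).measure_preimage (hCmeas n).nullMeasurableSet
  -- Q N is the disjoint union of the C n, n ≤ N
  have hQC : Q N = ⋃ n ∈ Finset.range (N + 1), C n := by
    apply Subset.antisymm
    · intro x hx
      rw [mem_iUnion₂] at hx ⊢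
      obtain ⟨n, hn, hxn⟩ := hx
      have hxn' : f^[n] x ∈ A := hxn
      have hex : ∃ m, f^[m] x ∈ A := ⟨n, hxn'⟩
      refine ⟨Nat.find hex, ?_, ?_⟩
      · rw [Finset.mem_range] at hn ⊢
        exact lt_of_le_of_lt (Nat.find_min' hex hxn') hn
      · rw [hmemC]
        exact ⟨Nat.find_spec hex, fun m hm => Nat.find_min hex hm⟩
    · exact iUnion₂_mono fun n _ => hCsubP n
  have hμQ : μ (Q N) = ∑ n ∈ Finset.range (N + 1), μ (C n) := by
    rw [hQC]
    exact measure_biUnion_finset (fun m _ n _ hmn => hCdisj hmn) fun n _ => hCmeas n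
  -- the base of the tower
  set K := N / h with hKdef
  set B := ⋃ k ∈ Finset.Icc 1 K, C (k * h) with hBdef
  have hBclopen : IsClopen B := by
    rw [hBdef, ← Finset.set_biUnion_coe]
    exact Set.Finite.isClopen_biUnion (Finset.finite_toSet _) fun k _ => hCclopen _
  have hBmeas : MeasurableSet B := hBclopen.isOpen.measurableSet
  have hμB : μ B = ∑ k ∈ Finset.Icc 1 K, μ (C (k * h)) := by
    rw [hBdef]
    refine measure_biUnion_finset ?_ fun k _ => hCmeas _
    intro k _ k' _ hne
    exact hCdisj fun e => hne (Nat.eq_of_mul_eq_mul_right hpos e)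
  -- images of B under iterates
  have himgclopen : ∀ (i : ℕ) (s : Set X), IsClopen s → IsClopen (f^[i] '' s) := by
    intro i
    induction i with
    | zero => intro s hs; simpa using hs
    | succ n ih =>
      intro s hs
      rw [Function.iterate_succ']
      rw [Set.image_comp]
      have heq : f '' (f^[n] '' s) = ⇑T.symm ⁻¹' (f^[n] '' s) := by
        rw [hf]
        exact T.toEquiv.image_eq_preimage_symm _
      rw [heq]
      exact (ih s hs).preimage T.symm.continuous
  have hμimg : ∀ (i : ℕ) (s : Set X), IsClopen s → μ (f^[i] '' s) = μ s := by
    intro i s hs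
    have h1 := (hT.iterate i).measure_preimage
      ((himgclopen i s hs).isOpen.measurableSet.nullMeasurableSet)
    rw [Function.Injective.preimage_image (Function.Injective.iterate T.injective i) s] at h1
    exact h1.symm
  have hBsub : ∀ i : ℕ, i < h → f^[i] '' B ⊆ ⋃ k ∈ Finset.Icc 1 K, C (k * h - i) := by
    intro i hi
    rw [hBdef, image_iUnion₂]
    refine iUnion₂_mono fun k hk => ?_
    rw [Finset.mem_Icc] at hk
    have hik : i ≤ k * h := le_trans hi.le (Nat.le_mul_of_pos_left h hk.1)
    have hsub := hkey1 (k * h - i) i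
    rw [Nat.sub_add_cancel hik] at hsub
    exact Set.image_subset_iff.mpr hsub
  have hdisj : Pairwise (Function.onFun Disjoint fun i : Fin h => f^[(i : ℕ)] '' B) := by
    intro i j hij
    have hijne : (i : ℕ) ≠ (j : ℕ) := fun e => hij (Fin.ext e)
    refine Set.disjoint_left.mpr fun x hxi hxj => ?_
    obtain ⟨k, hk, hxk⟩ := mem_iUnion₂.mp (hBsub i i.isLt hxi)
    obtain ⟨k', hk', hxk'⟩ := mem_iUnion₂.mp (hBsub j j.isLt hxj)
    have hne : k * h - (i : ℕ) ≠ k' * h - (j : ℕ) := by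
      rw [Finset.mem_Icc] at hk hk'
      intro e
      have hik : (i : ℕ) ≤ k * h := le_trans i.isLt.le (Nat.le_mul_of_pos_left h hk.1)
      have hjk : (j : ℕ) ≤ k' * h := le_trans j.isLt.le (Nat.le_mul_of_pos_left h hk'.1)
      have e2 : k * h + (j : ℕ) = k' * h + (i : ℕ) := by omega
      have e3 : (j : ℕ) % h = (i : ℕ) % h := by
        have := congrArg (· % h) e2
        simpa [Nat.mul_add_mod'] using this
      rw [Nat.mod_eq_of_lt j.isLt, Nat.mod_eq_of_lt i.isLt] at e3
      exact hijne e3.symm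
    exact (Set.disjoint_left.mp (hCdisj hne) hxk) hxk'
  -- measure of the tower
  have hmeasU : μ (⋃ i : Fin h, f^[(i : ℕ)] '' B) = h * μ B := by
    rw [measure_iUnion hdisj fun i => (himgclopen _ _ hBclopen).isOpen.measurableSet]
    rw [tsum_fintype]
    have hconst : ∀ i : Fin h, μ (f^[(i : ℕ)] '' B) = μ B := fun i => hμimg _ _ hBclopen
    rw [Finset.sum_congr rfl fun i _ => hconst i]
    rw [Finset.sum_const, Finset.card_univ, Fintype.card_fin, nsmul_eq_mul]
  -- the key counting estimate
  have hsplit : ∑ n ∈ Finset.range (N + 1), μ (C n)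
      = ∑ n ∈ Finset.range h, μ (C n) + ∑ n ∈ Finset.Ico h (N + 1), μ (C n) := by
    rw [Finset.range_eq_Ico, Finset.range_eq_Ico]
    exact (Finset.sum_Ico_consecutive (fun n => μ (C n)) (k := N + 1) (Nat.zero_le h) (by omega)).symm
  have hpart1 : ∑ n ∈ Finset.range h, μ (C n) ≤ (h : ENNReal) * μ A := by
    calc ∑ n ∈ Finset.range h, μ (C n) ≤ ∑ _n ∈ Finset.range h, μ A :=
          Finset.sum_le_sum fun n _ => hμCle n
      _ = (h : ENNReal) * μ A := by
          rw [Finset.sum_const, Finset.card_range, nsmul_eq_mul]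
  have hpart2 : ∑ n ∈ Finset.Ico h (N + 1), μ (C n)
      ≤ (h : ENNReal) * ∑ k ∈ Finset.Icc 1 K, μ (C (k * h)) := by
    have hsub : Finset.Ico h (N + 1) ⊆
        (Finset.Icc 1 K ×ˢ Finset.range h).image (fun p => p.1 * h + p.2) := by
      intro n hn
      rw [Finset.mem_Ico] at hn
      rw [Finset.mem_image]
      refine ⟨(n / h, n % h), ?_, Nat.div_add_mod' n h⟩
      rw [Finset.mem_product, Finset.mem_Icc, Finset.mem_range]
      exact ⟨⟨(Nat.one_le_div_iff hpos).mpr hn.1,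
        Nat.div_le_div_right (by omega)⟩, Nat.mod_lt _ hpos⟩
    have hinj : ∀ p ∈ Finset.Icc 1 K ×ˢ Finset.range h,
        ∀ q ∈ Finset.Icc 1 K ×ˢ Finset.range h,
        (fun p : ℕ × ℕ => p.1 * h + p.2) p = (fun p : ℕ × ℕ => p.1 * h + p.2) q → p = q := by
      intro p hp q hq e
      rw [Finset.mem_product, Finset.mem_range] at hp hq
      simp only at e
      have h2 : p.2 = q.2 := by
        have := congrArg (· % h) e
        simpa [Nat.mul_add_mod', Nat.mod_eq_of_lt hp.2, Nat.mod_eq_of_lt hq.2] using this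
      have h1 : p.1 = q.1 := Nat.eq_of_mul_eq_mul_right hpos (by omega)
      exact Prod.ext h1 h2
    calc ∑ n ∈ Finset.Ico h (N + 1), μ (C n)
        ≤ ∑ n ∈ (Finset.Icc 1 K ×ˢ Finset.range h).image (fun p => p.1 * h + p.2), μ (C n) :=
          Finset.sum_le_sum_of_subset hsub
      _ = ∑ p ∈ Finset.Icc 1 K ×ˢ Finset.range h, μ (C (p.1 * h + p.2)) :=
          Finset.sum_image hinj
      _ = ∑ k ∈ Finset.Icc 1 K, ∑ r ∈ Finset.range h, μ (C (k * h + r)) :=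
          Finset.sum_product _ _ _
      _ ≤ ∑ k ∈ Finset.Icc 1 K, ∑ _r ∈ Finset.range h, μ (C (k * h)) :=
          Finset.sum_le_sum fun k _ => Finset.sum_le_sum fun r _ => hμCdecr (k * h) r
      _ = (h : ENNReal) * ∑ k ∈ Finset.Icc 1 K, μ (C (k * h)) := by
          rw [Finset.mul_sum]
          exact Finset.sum_congr rfl fun k _ => by
            rw [Finset.sum_const, Finset.card_range, nsmul_eq_mul]
  have hμAsmall : (h : ENNReal) * μ A ≤ δ2 := by
    have hAle : μ A ≤ ENNReal.ofReal (ε' / (2 * h)) := hAsmall.le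
    calc (h : ENNReal) * μ A ≤ (h : ENNReal) * ENNReal.ofReal (ε' / (2 * h)) :=
          mul_le_mul_right hAle _
      _ = ENNReal.ofReal ((h : ℝ) * (ε' / (2 * h))) := by
          rw [← ENNReal.ofReal_natCast h, ← ENNReal.ofReal_mul (by positivity)]
      _ = δ2 := by
          rw [hδ2def]
          congr 1
          field_simp
  have hchain : μ (Q N) ≤ δ2 + μ (⋃ i : Fin h, f^[(i : ℕ)] '' B) := by
    rw [hμQ, hsplit, hmeasU, hμB]
    exact add_le_add (le_trans hpart1 hμAsmall) hpart2
  have h1 : (1 : ENNReal) < μ (Q N) + δ2 := by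
    rwa [ENNReal.sub_lt_iff_lt_right hδ2ne hδ2le1] at hE
  have h2 : (1 : ENNReal) < μ (⋃ i : Fin h, f^[(i : ℕ)] '' B) + ENNReal.ofReal ε' := by
    calc (1 : ENNReal) < μ (Q N) + δ2 := h1
      _ ≤ (δ2 + μ (⋃ i : Fin h, f^[(i : ℕ)] '' B)) + δ2 := add_le_add_left hchain _
      _ = μ (⋃ i : Fin h, f^[(i : ℕ)] '' B) + (δ2 + δ2) := by ring
      _ = μ (⋃ i : Fin h, f^[(i : ℕ)] '' B) + ENNReal.ofReal ε' := by rw [hδ2δ2]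
  have hfinal' : 1 - ENNReal.ofReal ε' < μ (⋃ i : Fin h, f^[(i : ℕ)] '' B) := by
    rw [ENNReal.sub_lt_iff_lt_right ENNReal.ofReal_ne_top hε'le1]
    exact h2
  have hcoe : ∀ i : ℕ, ⇑(T.toEquiv ^ i) = f^[i] := fun i => rfl
  refine ⟨B, hBclopen, ?_, ?_⟩
  · intro i j hij
    have := hdisj hij
    simpa [Function.onFun, hcoe] using this
  · have hUeq : (⋃ i : Fin h, (T.toEquiv ^ (i : ℕ)) '' B)
        = ⋃ i : Fin h, f^[(i : ℕ)] '' B := by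
      simp only [hcoe]
    rw [gt_iff_lt, hUeq]
    exact lt_of_le_of_lt (tsub_le_tsub_left hofle 1) hfinal'
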